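/- arXiv:2307.13653 — 3 statements merged into one kernel-verified Lean document; each statement's English description precedes it below -/
import Mathlib

section
/- The Poisson-type kernel identity: for a > 0, ∬_{ℝ²} exp(-a‖k‖) e^{i(k₁x + k₂y)} dk₁ dk₂ = 2π a / (a² + x² + y²)^{3/2}. -/
open MeasureTheory Real Filter Topology

open Complex in

set_option maxHeartbeats 1000000 in
lemma key_alg (a s b e : ℂ) (has : a + s ≠ 0) (hs : s ≠ 0) (hb : b ≠ 0) (he : e ≠ 0)
    (hup : 1 - b*e/(a+s) ≠ 0) (hum : 1 + (s-a)*e⁻¹/b ≠ 0) :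
    (I*a/s^3)*((-(b*(e*I)/(a+s)))/(1 - b*e/(a+s)))
    - (I/s^2)*(-(-(b*(e*I)/(a+s)))/(1 - b*e/(a+s))^2)
    + a/s^3
    - (I*a/s^3)*(((s-a)*(e⁻¹*(-I))/b)/(1 + (s-a)*e⁻¹/b))
    + (I/s^2)*(-((s-a)*(e⁻¹*(-I))/b)/(1 + (s-a)*e⁻¹/b)^2)
    = ((a - (b*e - (s^2-a^2)*e⁻¹/b)/2)^2)⁻¹ := by
  have hj2 : Complex.I^2 = -1 := Complex.I_sq
  have hj3 : Complex.I^3 = -Complex.I := by rw [pow_succ, hj2]; ring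
  have hj4 : Complex.I^4 = 1 := by rw [pow_succ, hj3, neg_mul, Complex.I_mul_I, neg_neg]
  have e1 : 1 - b*e/(a+s) = (a+s-b*e)/(a+s) := by field_simp
  have e2 : 1 + (s-a)*e⁻¹/b = (b*e+(s-a))/(b*e) := by field_simp
  have e3 : a - (b*e - (s^2-a^2)*e⁻¹/b)/2 = ((a+s-b*e)*(b*e+(s-a)))/(2*(b*e)) := by
    field_simp; ring
  have hP : a+s-b*e ≠ 0 := by intro h; apply hup; rw [e1, h, zero_div]
  have hQ : b*e+(s-a) ≠ 0 := by intro h; apply hum; rw [e2, h, zero_div]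
  have hs2 : (s:ℂ)^2 ≠ 0 := pow_ne_zero _ hs
  have hs3 : (s:ℂ)^3 ≠ 0 := pow_ne_zero _ hs
  have hbe : b*e ≠ 0 := mul_ne_zero hb he
  have T1 : (I*a/s^3)*((-(b*(e*I)/(a+s)))/(1 - b*e/(a+s))) = a*b*e/(s^3*(a+s-b*e)) := by
    rw [e1]; field_simp; ring_nf; simp only [hj2, hj3, hj4]; ring
  have T2 : (I/s^2)*(-(-(b*(e*I)/(a+s)))/(1 - b*e/(a+s))^2)
      = -((a+s)*b*e/(s^2*(a+s-b*e)^2)) := by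
    rw [e1]; field_simp; ring_nf; simp only [hj2, hj3, hj4]
  have T4 : (I*a/s^3)*(((s-a)*(e⁻¹*(-I))/b)/(1 + (s-a)*e⁻¹/b))
      = a*(s-a)/(s^3*(b*e+(s-a))) := by
    rw [e2]; field_simp; ring_nf; simp only [hj2, hj3, hj4]; ring
  have T5 : (I/s^2)*(-((s-a)*(e⁻¹*(-I))/b)/(1 + (s-a)*e⁻¹/b)^2)
      = -((s-a)*b*e/(s^2*(b*e+(s-a))^2)) := by
    rw [e2]; field_simp; ring_nf; simp only [hj2, hj3, hj4]; ring
  have e4 : ((a - (b*e - (s^2-a^2)*e⁻¹/b)/2)^2)⁻¹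
      = 4*b^2*e^2/((a+s-b*e)^2*(b*e+(s-a))^2) := by
    rw [e3]; rw [div_pow, inv_div]
    rw [div_eq_div_iff (pow_ne_zero _ (mul_ne_zero hP hQ))
      (mul_ne_zero (pow_ne_zero _ hP) (pow_ne_zero _ hQ))]
    ring
  rw [T1, T2, T4, T5, e4]
  have hD : s^3*(a+s-b*e)^2*(b*e+(s-a))^2 ≠ 0 :=
    mul_ne_zero (mul_ne_zero hs3 (pow_ne_zero _ hP)) (pow_ne_zero _ hQ)
  have c1 : a*b*e/(s^3*(a+s-b*e))
      = (a*b*e*((a+s-b*e)*(b*e+(s-a))^2))/(s^3*(a+s-b*e)^2*(b*e+(s-a))^2) := by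
    rw [div_eq_div_iff (mul_ne_zero hs3 hP) hD]; ring
  have c2 : (a+s)*b*e/(s^2*(a+s-b*e)^2)
      = ((a+s)*b*e*(s*(b*e+(s-a))^2))/(s^3*(a+s-b*e)^2*(b*e+(s-a))^2) := by
    rw [div_eq_div_iff (mul_ne_zero hs2 (pow_ne_zero _ hP)) hD]; ring
  have c3 : a/s^3 = (a*((a+s-b*e)^2*(b*e+(s-a))^2))/(s^3*(a+s-b*e)^2*(b*e+(s-a))^2) := by
    rw [div_eq_div_iff hs3 hD]; ring
  have c4 : a*(s-a)/(s^3*(b*e+(s-a)))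
      = (a*(s-a)*((a+s-b*e)^2*(b*e+(s-a))))/(s^3*(a+s-b*e)^2*(b*e+(s-a))^2) := by
    rw [div_eq_div_iff (mul_ne_zero hs3 hQ) hD]; ring
  have c5 : (s-a)*b*e/(s^2*(b*e+(s-a))^2)
      = ((s-a)*b*e*(s*(a+s-b*e)^2))/(s^3*(a+s-b*e)^2*(b*e+(s-a))^2) := by
    rw [div_eq_div_iff (mul_ne_zero hs2 (pow_ne_zero _ hQ)) hD]; ring
  have c6 : 4*b^2*e^2/((a+s-b*e)^2*(b*e+(s-a))^2)
      = (4*b^2*e^2*s^3)/(s^3*(a+s-b*e)^2*(b*e+(s-a))^2) := by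
    rw [div_eq_div_iff (mul_ne_zero (pow_ne_zero _ hP) (pow_ne_zero _ hQ)) hD]; ring
  rw [c1, c2, c3, c4, c5, c6, ← neg_div, ← neg_div, ← sub_div, ← add_div, ← sub_div, ← add_div,
    div_eq_div_iff hD hD]
  ring

open Complex MeasureTheory Real Filter Topology Set in
set_option maxHeartbeats 1000000 in
lemma rho_int (a c : ℝ) (ha : 0 < a) :
    ∫ ρ in Set.Ioi (0:ℝ), (ρ:ℂ) * Complex.exp ((-(a:ℂ) + Complex.I*c) * ρ)
      = (((a:ℂ) - Complex.I*c)^2)⁻¹ := by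
  set z : ℂ := (a:ℂ) - Complex.I*c with hzdef
  have hz : z ≠ 0 := by
    intro h
    have : z.re = 0 := by rw [h]; simp
    simp [hzdef, Complex.sub_re, Complex.mul_re] at this
    exact ha.ne' this
  have hre : ∀ ρ : ℝ, ((-(a:ℂ) + Complex.I*c) * ρ).re = -(a*ρ) := by
    intro ρ
    simp [Complex.add_re, Complex.mul_re]
    all_goals ring
  have hexp : ∀ ρ : ℝ, (-(a:ℂ) + Complex.I*c) * ρ = -z * ρ := by
    intro ρ; rw [hzdef]; ring
  have hgint : IntegrableOn (fun ρ : ℝ => ρ * Real.exp (-(a*ρ))) (Set.Ioi 0) := by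
    have := integrableOn_rpow_mul_exp_neg_mul_rpow (p := 1) (s := 1) (b := a)
      (by norm_num) zero_lt_one ha
    apply this.congr_fun ?_ measurableSet_Ioi
    intro ρ hρ
    simp only [Real.rpow_one, neg_mul]
  have hint : IntegrableOn (fun ρ : ℝ => (ρ:ℂ) * Complex.exp ((-(a:ℂ) + Complex.I*c) * ρ))
      (Set.Ioi 0) := by
    apply Integrable.mono' hgint
    · apply Continuous.aestronglyMeasurable
      fun_prop
    · filter_upwards [ae_restrict_mem measurableSet_Ioi] with ρ hρ
      rw [norm_mul, Complex.norm_exp, hre,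
        Complex.norm_real, Real.norm_eq_abs, abs_of_pos hρ]
  have hderiv : ∀ ρ ∈ Set.Ici (0:ℝ), HasDerivAt
      (fun ρ : ℝ => -(((ρ:ℂ)/z + 1/z^2) * Complex.exp (-z * ρ)))
      ((ρ:ℂ) * Complex.exp ((-(a:ℂ) + Complex.I*c) * ρ)) ρ := by
    intro ρ _
    have h0 : HasDerivAt (fun t : ℝ => ((t:ℂ))) 1 ρ := by
      exact HasDerivAt.ofReal_comp (hasDerivAt_id ρ)
    have h1 : HasDerivAt (fun t : ℝ => ((t:ℂ)/z + 1/z^2)) (1/z) ρ :=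
      (h0.div_const z).add_const _
    have h2 : HasDerivAt (fun t : ℝ => Complex.exp (-z * t)) (Complex.exp (-z*ρ) * -z) ρ := by
      have h3 : HasDerivAt (fun t : ℝ => -z * (t:ℂ)) (-z) ρ := by
        simpa using h0.const_mul (-z)
      exact h3.cexp
    have := (h1.mul h2).neg
    refine this.congr_deriv ?_
    rw [hexp ρ]
    field_simp
    ring
  have htend : Tendsto (fun ρ : ℝ => -(((ρ:ℂ)/z + 1/z^2) * Complex.exp (-z * ρ)))
      atTop (𝓝 0) := by
    rw [tendsto_zero_iff_norm_tendsto_zero]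
    have l1 : Tendsto (fun ρ : ℝ => ρ * Real.exp (-(a*ρ))) atTop (𝓝 0) := by
      have := tendsto_rpow_mul_exp_neg_mul_atTop_nhds_zero 1 a ha
      apply this.congr'
      filter_upwards [eventually_gt_atTop (0:ℝ)] with ρ hρ
      simp only [Real.rpow_one, neg_mul]
    have l2 : Tendsto (fun ρ : ℝ => Real.exp (-(a*ρ))) atTop (𝓝 0) := by
      have := tendsto_rpow_mul_exp_neg_mul_atTop_nhds_zero 0 a ha
      apply this.congr'
      filter_upwards [eventually_gt_atTop (0:ℝ)] with ρ hρ
      rw [Real.rpow_zero, one_mul, neg_mul]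
    have l3 : Tendsto (fun ρ : ℝ => (‖(1:ℂ)/z‖ * ρ + ‖(1:ℂ)/z^2‖) * Real.exp (-(a*ρ)))
        atTop (𝓝 0) := by
      have h := (l1.const_mul ‖(1:ℂ)/z‖).add (l2.const_mul ‖(1:ℂ)/z^2‖)
      rw [show ‖(1:ℂ)/z‖ * 0 + ‖(1:ℂ)/z^2‖ * 0 = 0 by ring] at h
      exact h.congr (fun ρ => by ring)
    apply squeeze_zero' ?_ ?_ l3
    · filter_upwards with ρ; positivity
    · filter_upwards [eventually_ge_atTop (0:ℝ)] with ρ hρ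
      rw [norm_neg, norm_mul]
      have h1 : ‖Complex.exp (-z * ρ)‖ = Real.exp (-(a*ρ)) := by
        rw [Complex.norm_exp]
        congr 1
        rw [show -z * (ρ:ℂ) = (-(a:ℂ) + Complex.I*c) * ρ from (hexp ρ).symm]
        exact hre ρ
      rw [h1]
      apply mul_le_mul_of_nonneg_right _ (Real.exp_nonneg _)
      calc ‖(ρ:ℂ)/z + 1/z^2‖ ≤ ‖(ρ:ℂ)/z‖ + ‖(1:ℂ)/z^2‖ := norm_add_le _ _
        _ = ‖(1:ℂ)/z‖ * ρ + ‖(1:ℂ)/z^2‖ := by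
            simp only [norm_div, norm_inv, norm_one, norm_pow, Complex.norm_real,
              Real.norm_eq_abs, _root_.abs_of_nonneg hρ]
            ring
  have := MeasureTheory.integral_Ioi_of_hasDerivAt_of_tendsto' hderiv hint htend
  rw [this]
  push_cast
  rw [hzdef]
  field_simp
  simp

open Complex MeasureTheory Set intervalIntegral in
set_option maxHeartbeats 1000000 in
lemma theta_int (a x y : ℝ) (ha : 0 < a) :
    (∫ θ in (-Real.pi)..Real.pi,
      (((a : ℂ) - Complex.I * ((x * Real.cos θ + y * Real.sin θ : ℝ) : ℂ)) ^ 2)⁻¹)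
      = ((2 * Real.pi * a / (Real.sqrt (a ^ 2 + x ^ 2 + y ^ 2)) ^ 3 : ℝ) : ℂ) := by
  by_cases hr : 0 < x ^ 2 + y ^ 2
  case neg =>
    have hx : x = 0 := by nlinarith [sq_nonneg x, sq_nonneg y]
    have hy : y = 0 := by nlinarith [sq_nonneg x, sq_nonneg y]
    subst hx; subst hy
    simp only [zero_mul, add_zero, zero_add, Complex.ofReal_zero, mul_zero, sub_zero]
    rw [intervalIntegral.integral_const, sub_neg_eq_add,
      show a^2+(0:ℝ)^2+(0:ℝ)^2 = a^2 from by norm_num, Real.sqrt_sq ha.le,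
      Complex.real_smul]
    have haC : (a:ℂ) ≠ 0 := by exact_mod_cast ha.ne'
    push_cast
    field_simp
    ring
  case pos =>
    set s : ℝ := Real.sqrt (a ^ 2 + x ^ 2 + y ^ 2) with hsdef
    have hs2 : s ^ 2 = a ^ 2 + x ^ 2 + y ^ 2 := Real.sq_sqrt (by positivity)
    have hs0 : 0 < s := Real.sqrt_pos.2 (by positivity)
    have has : a < s := by nlinarith
    set b : ℂ := (y : ℂ) + Complex.I * x with hbdef
    have hbre : b.re = y := by simp [hbdef]
    have hbim : b.im = x := by simp [hbdef]
    have hbabs : ‖b‖ ^ 2 = x ^ 2 + y ^ 2 := by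
      rw [Complex.sq_norm, Complex.normSq_apply, hbre, hbim]; ring
    have hb : b ≠ 0 := by
      intro h
      rw [h] at hbre hbim
      simp at hbre hbim
      nlinarith
    have habs1 : ‖b‖ < a + s := by
      refine lt_of_pow_lt_pow_left₀ 2 (by positivity) ?_
      rw [hbabs]; nlinarith
    have habs2 : s - a < ‖b‖ := by
      refine lt_of_pow_lt_pow_left₀ 2 (norm_nonneg b) ?_
      rw [hbabs]; nlinarith
    have hsC : (s : ℂ) ≠ 0 := by exact_mod_cast hs0.ne'
    have hasC : (a : ℂ) + s ≠ 0 := by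
      have : ((a + s : ℝ) : ℂ) ≠ 0 := by exact_mod_cast (by positivity : (a + s : ℝ) ≠ 0)
      simpa using this
    -- pointwise facts
    have hE1 : ∀ θ : ℝ, Complex.exp ((θ:ℂ) * I) ≠ 0 := fun θ => Complex.exp_ne_zero _
    have hnorm1 : ∀ θ : ℝ, ‖-(b * Complex.exp ((θ:ℂ) * I) / ((a:ℂ) + s))‖ < 1 := by
      intro θ
      rw [norm_neg, norm_div, norm_mul]
      have h1 : ‖Complex.exp ((θ:ℂ) * I)‖ = 1 := Complex.norm_exp_ofReal_mul_I θ
      have h2 : ‖(a:ℂ) + s‖ = a + s := by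
        rw [show (a:ℂ) + s = ((a + s : ℝ):ℂ) by push_cast; ring, Complex.norm_real,
          Real.norm_eq_abs, abs_of_pos (by positivity)]
      rw [h1, h2, mul_one, div_lt_one (by positivity)]
      exact habs1
    have hnorm2 : ∀ θ : ℝ, ‖((s:ℂ) - a) * Complex.exp (-((θ:ℂ) * I)) / b‖ < 1 := by
      intro θ
      rw [norm_div, norm_mul]
      have h1 : ‖Complex.exp (-((θ:ℂ) * I))‖ = 1 := by
        rw [show -((θ:ℂ) * I) = ((-θ : ℝ):ℂ) * I by push_cast; ring]
        exact Complex.norm_exp_ofReal_mul_I (-θ)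
      have h2 : ‖(s:ℂ) - a‖ = s - a := by
        rw [show (s:ℂ) - a = ((s - a : ℝ):ℂ) by push_cast; ring, Complex.norm_real,
          Real.norm_eq_abs, abs_of_pos (by linarith)]
      rw [h1, h2, mul_one, div_lt_one (by
        have := norm_pos_iff.mpr hb; exact this)]
      exact habs2
    have hslit1 : ∀ θ : ℝ, 1 - b * Complex.exp ((θ:ℂ) * I) / ((a:ℂ) + s) ∈ Complex.slitPlane := by
      intro θ
      have := Complex.mem_slitPlane_of_norm_lt_one (hnorm1 θ)
      simpa [sub_eq_add_neg] using this
    have hslit2 : ∀ θ : ℝ, 1 + ((s:ℂ) - a) * Complex.exp (-((θ:ℂ) * I)) / b ∈ Complex.slitPlane :=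
      fun θ => Complex.mem_slitPlane_of_norm_lt_one (hnorm2 θ)
    have hne1 : ∀ θ : ℝ, 1 - b * Complex.exp ((θ:ℂ) * I) / ((a:ℂ) + s) ≠ 0 :=
      fun θ => Complex.slitPlane_ne_zero (hslit1 θ)
    have hne2 : ∀ θ : ℝ, 1 + ((s:ℂ) - a) * Complex.exp (-((θ:ℂ) * I)) / b ≠ 0 :=
      fun θ => Complex.slitPlane_ne_zero (hslit2 θ)
    -- the rewriting of I * c(θ)
    have hconj2 : ((s:ℂ)^2 - (a:ℂ)^2)/b = (y:ℂ) - Complex.I * x := by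
      rw [div_eq_iff hb, hbdef]
      have hs2c : ((s:ℂ))^2 = (a:ℂ)^2 + (x:ℂ)^2 + (y:ℂ)^2 := by exact_mod_cast hs2
      linear_combination hs2c + (x:ℂ)^2 * Complex.I_sq
    have hIc : ∀ θ : ℝ, Complex.I * ((x * Real.cos θ + y * Real.sin θ : ℝ) : ℂ)
        = (b * Complex.exp ((θ:ℂ) * I)
          - ((s:ℂ)^2 - (a:ℂ)^2) * (Complex.exp ((θ:ℂ) * I))⁻¹ / b)/2 := by
      intro θ
      rw [show ((s:ℂ)^2 - (a:ℂ)^2) * (Complex.exp ((θ:ℂ) * I))⁻¹ / b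
          = (((s:ℂ)^2 - (a:ℂ)^2)/b) * (Complex.exp ((θ:ℂ) * I))⁻¹ by ring]
      rw [hconj2, ← Complex.exp_neg,
        show -((θ:ℂ) * I) = ((-θ : ℝ):ℂ) * I by push_cast; ring,
        Complex.exp_mul_I, Complex.exp_mul_I, Complex.ofReal_neg, Complex.cos_neg,
        Complex.sin_neg, hbdef]
      push_cast [Complex.ofReal_cos, Complex.ofReal_sin]
      ring
    -- nonvanishing of a - I*c
    have hAC : ∀ θ : ℝ, (a : ℂ) - Complex.I * ((x * Real.cos θ + y * Real.sin θ : ℝ) : ℂ) ≠ 0 := by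
      intro θ h
      have : ((a : ℂ) - Complex.I * ((x * Real.cos θ + y * Real.sin θ : ℝ) : ℂ)).re = 0 := by
        rw [h]; simp
      simp [Complex.sub_re, Complex.mul_re] at this
      exact ha.ne' this
    -- derivative
    have hF : ∀ θ : ℝ, HasDerivAt (fun t : ℝ =>
        (I*(a:ℂ)/(s:ℂ)^3) * Complex.log (1 - b * Complex.exp ((t:ℂ)*I)/((a:ℂ)+s))
        - (I/(s:ℂ)^2) * (1 - b * Complex.exp ((t:ℂ)*I)/((a:ℂ)+s))⁻¹
        + ((a:ℂ)/(s:ℂ)^3) * (t:ℂ)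
        - (I*(a:ℂ)/(s:ℂ)^3) * Complex.log (1 + ((s:ℂ)-a) * Complex.exp (-((t:ℂ)*I))/b)
        + (I/(s:ℂ)^2) * (1 + ((s:ℂ)-a) * Complex.exp (-((t:ℂ)*I))/b)⁻¹)
        ((((a : ℂ) - Complex.I * ((x * Real.cos θ + y * Real.sin θ : ℝ) : ℂ)) ^ 2)⁻¹) θ := by
      intro θ
      have h0 : HasDerivAt (fun t : ℝ => ((t:ℂ) * I)) I θ := by
        simpa using (ContinuousLinearMap.hasDerivAt (Complex.ofRealCLM) (x := θ)).mul_const I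
      have hE : HasDerivAt (fun t : ℝ => Complex.exp ((t:ℂ) * I))
          (Complex.exp ((θ:ℂ)*I) * I) θ := h0.cexp
      have hE' : HasDerivAt (fun t : ℝ => Complex.exp (-((t:ℂ) * I)))
          (Complex.exp (-((θ:ℂ)*I)) * -I) θ := h0.neg.cexp
      have hu1 : HasDerivAt (fun t : ℝ => 1 - b * Complex.exp ((t:ℂ)*I)/((a:ℂ)+s))
          (-(b * (Complex.exp ((θ:ℂ)*I) * I) / ((a:ℂ)+s))) θ :=
        ((hE.const_mul b).div_const _).const_sub 1
      have hu2 : HasDerivAt (fun t : ℝ => 1 + ((s:ℂ)-a) * Complex.exp (-((t:ℂ)*I))/b)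
          (((s:ℂ)-a) * (Complex.exp (-((θ:ℂ)*I)) * -I) / b) θ :=
        ((hE'.const_mul ((s:ℂ)-a)).div_const _).const_add 1
      have h1 := (hu1.clog_real (hslit1 θ)).const_mul (I*(a:ℂ)/(s:ℂ)^3)
      have h2' : HasDerivAt (fun t : ℝ => (1 - b * Complex.exp ((t:ℂ)*I)/((a:ℂ)+s))⁻¹)
          (-(-(b * (Complex.exp ((θ:ℂ)*I) * I) / ((a:ℂ)+s)))
            / (1 - b * Complex.exp ((θ:ℂ)*I)/((a:ℂ)+s))^2) θ := by
        exact hu1.inv (hne1 θ)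
      have h2 := h2'.const_mul (I/(s:ℂ)^2)
      have h3 : HasDerivAt (fun t : ℝ => ((a:ℂ)/(s:ℂ)^3) * (t:ℂ)) ((a:ℂ)/(s:ℂ)^3) θ := by
        simpa using (ContinuousLinearMap.hasDerivAt (Complex.ofRealCLM) (x := θ)).const_mul
          ((a:ℂ)/(s:ℂ)^3)
      have h4 := (hu2.clog_real (hslit2 θ)).const_mul (I*(a:ℂ)/(s:ℂ)^3)
      have h5' : HasDerivAt (fun t : ℝ => (1 + ((s:ℂ)-a) * Complex.exp (-((t:ℂ)*I))/b)⁻¹)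
          (-(((s:ℂ)-a) * (Complex.exp (-((θ:ℂ)*I)) * -I) / b)
            / (1 + ((s:ℂ)-a) * Complex.exp (-((θ:ℂ)*I))/b)^2) θ := by
        exact hu2.inv (hne2 θ)
      have h5 := h5'.const_mul (I/(s:ℂ)^2)
      have htot := ((((h1.sub h2).add h3).sub h4).add h5)
      refine htot.congr_deriv ?_
      rw [Complex.exp_neg]
      rw [hIc θ]
      exact key_alg (a:ℂ) (s:ℂ) b (Complex.exp ((θ:ℂ)*I)) hasC hsC hb (hE1 θ)
        (by simpa [Complex.exp_neg] using hne1 θ)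
        (by simpa [Complex.exp_neg] using hne2 θ)
    -- continuity / integrability of the integrand
    have hcont : Continuous (fun θ : ℝ =>
        (((a : ℂ) - Complex.I * ((x * Real.cos θ + y * Real.sin θ : ℝ) : ℂ)) ^ 2)⁻¹) := by
      apply Continuous.inv₀
      · fun_prop
      · intro θ; exact pow_ne_zero _ (hAC θ)
    rw [intervalIntegral.integral_eq_sub_of_hasDerivAt (fun θ _ => hF θ)
      (hcont.intervalIntegrable _ _)]
    -- evaluate at endpoints
    have he1 : Complex.exp (((Real.pi:ℝ):ℂ) * I) = -1 := Complex.exp_pi_mul_I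
    have he2 : Complex.exp ((((-Real.pi:ℝ)):ℂ) * I) = -1 := by
      rw [show (((-Real.pi:ℝ)):ℂ) * I = -(((Real.pi:ℝ):ℂ) * I) by push_cast; ring,
        Complex.exp_neg, he1]
      norm_num
    have he3 : Complex.exp (-(((Real.pi:ℝ):ℂ) * I)) = -1 := by
      rw [Complex.exp_neg, he1]; norm_num
    have he4 : Complex.exp (-((((-Real.pi:ℝ)):ℂ) * I)) = -1 := by
      rw [show -((((-Real.pi:ℝ)):ℂ) * I) = ((Real.pi:ℝ):ℂ) * I by push_cast; ring, he1]
    rw [he1, he2, he3, he4]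
    push_cast
    ring

set_option maxHeartbeats 1000000 in
open Complex in
theorem poisson_kernel_fourier (a : ℝ) (ha : 0 < a) (x y : ℝ) :
    (∫ k : ℝ × ℝ, (Real.exp (-(a * Real.sqrt (k.1^2 + k.2^2))) : ℂ) *
        Complex.exp (Complex.I * ((k.1*x + k.2*y : ℝ) : ℂ))) =
      ((2 * Real.pi * a / ((a^2 + x^2 + y^2) ^ ((3:ℝ)/2))) : ℝ) := by
  have hπ : (0:ℝ) < Real.pi := Real.pi_pos
  set H : ℝ × ℝ → ℂ := fun p =>
    (p.1:ℂ) * Complex.exp ((-(a:ℂ) + Complex.I*((x*Real.cos p.2 + y*Real.sin p.2 : ℝ):ℂ))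
      * (p.1:ℂ)) with hHdef
  have hgint : IntegrableOn (fun ρ : ℝ => ρ * Real.exp (-(a*ρ))) (Set.Ioi 0) := by
    have := integrableOn_rpow_mul_exp_neg_mul_rpow (p := 1) (s := 1) (b := a)
      (by norm_num) zero_lt_one ha
    apply this.congr_fun ?_ measurableSet_Ioi
    intro ρ hρ
    simp only [Real.rpow_one, neg_mul]
  have hre : ∀ (c ρ : ℝ), ((-(a:ℂ) + Complex.I*c) * ρ).re = -(a*ρ) := by
    intro c ρ
    simp [Complex.add_re, Complex.mul_re]
    all_goals ring
  have hH : Integrable H ((volume.restrict (Set.Ioi (0:ℝ))).prod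
      (volume.restrict (Set.Ioo (-Real.pi) Real.pi))) := by
    apply Integrable.mono' (g := fun p : ℝ × ℝ => p.1 * Real.exp (-(a*p.1)) * 1)
    · exact (hgint.mul_prod (integrableOn_const measure_Ioo_lt_top.ne))
    · apply Continuous.aestronglyMeasurable
      rw [hHdef]
      fun_prop
    · have hmem : ∀ᵐ p ∂((volume.restrict (Set.Ioi (0:ℝ))).prod
          (volume.restrict (Set.Ioo (-Real.pi) Real.pi))), p ∈ Set.Ioi (0:ℝ) ×ˢ Set.Ioo (-Real.pi) Real.pi := by
        rw [Measure.prod_restrict]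
        exact ae_restrict_mem (measurableSet_Ioi.prod measurableSet_Ioo)
      filter_upwards [hmem] with p hp
      rw [hHdef]
      simp only
      rw [norm_mul, Complex.norm_exp,
        hre (x*Real.cos p.2 + y*Real.sin p.2) p.1, Complex.norm_real, Real.norm_eq_abs,
        abs_of_pos hp.1, mul_one]
  calc (∫ k : ℝ × ℝ, (Real.exp (-(a * Real.sqrt (k.1^2 + k.2^2))) : ℂ) *
        Complex.exp (Complex.I * ((k.1*x + k.2*y : ℝ) : ℂ)))
      = ∫ p in polarCoord.target, p.1 • ((Real.exp (-(a * Real.sqrt ((polarCoord.symm p).1^2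
          + (polarCoord.symm p).2^2))) : ℂ) *
          Complex.exp (Complex.I * (((polarCoord.symm p).1*x + (polarCoord.symm p).2*y : ℝ) : ℂ))) :=
        (integral_comp_polarCoord_symm _).symm
    _ = ∫ p in Set.Ioi (0:ℝ) ×ˢ Set.Ioo (-Real.pi) Real.pi, H p := by
        apply setIntegral_congr_fun (measurableSet_Ioi.prod measurableSet_Ioo)
        rintro ⟨ρ, θ⟩ ⟨hρ, hθ⟩
        have hps : polarCoord.symm (ρ, θ) = (ρ * Real.cos θ, ρ * Real.sin θ) := rfl
        beta_reduce
        rw [hps]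
        simp only [hHdef]
        have hρ' : 0 < ρ := hρ
        have hsq : Real.sqrt ((ρ*Real.cos θ)^2 + (ρ*Real.sin θ)^2) = ρ := by
          rw [show (ρ*Real.cos θ)^2 + (ρ*Real.sin θ)^2 = ρ^2 by
            nlinarith [Real.sin_sq_add_cos_sq θ]]
          exact Real.sqrt_sq hρ'.le
        rw [Complex.real_smul, hsq]
        congr 1
        rw [Complex.ofReal_exp, ← Complex.exp_add]
        congr 1
        push_cast
        ring
    _ = ∫ p, H p ∂((volume.restrict (Set.Ioi (0:ℝ))).prod
          (volume.restrict (Set.Ioo (-Real.pi) Real.pi))) := by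
        rw [Measure.prod_restrict, ← Measure.volume_eq_prod]
    _ = ∫ θ in Set.Ioo (-Real.pi) Real.pi, ∫ ρ in Set.Ioi (0:ℝ), H (ρ, θ) :=
        integral_prod_symm H hH
    _ = ∫ θ in Set.Ioo (-Real.pi) Real.pi,
          (((a : ℂ) - Complex.I * ((x * Real.cos θ + y * Real.sin θ : ℝ) : ℂ)) ^ 2)⁻¹ := by
        apply setIntegral_congr_fun measurableSet_Ioo
        intro θ _
        simp only [hHdef]
        exact rho_int a (x*Real.cos θ + y*Real.sin θ) ha
    _ = ∫ θ in (-Real.pi)..Real.pi,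
          (((a : ℂ) - Complex.I * ((x * Real.cos θ + y * Real.sin θ : ℝ) : ℂ)) ^ 2)⁻¹ := by
        rw [intervalIntegral.integral_of_le (by linarith), integral_Ioc_eq_integral_Ioo]
    _ = ((2 * Real.pi * a / (Real.sqrt (a ^ 2 + x ^ 2 + y ^ 2)) ^ 3 : ℝ) : ℂ) := theta_int a x y ha
    _ = ((2 * Real.pi * a / ((a^2 + x^2 + y^2) ^ ((3:ℝ)/2))) : ℝ) := by
        congr 2
        rw [Real.sqrt_eq_rpow, ← Real.rpow_natCast ((a^2+x^2+y^2) ^ ((1:ℝ)/2)) 3,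
          ← Real.rpow_mul (by positivity)]
        norm_num
end

section
/- For the half-plane convolution u(x,t) = 1/2 + (1/π) arctan(2x/t), thresholding at level 1/2 − σt (for applied stress σ > 0 and small t) moves the front x = 0 to x satisfying (1/π)arctan(2x/t) = −σt, giving front displacement x = −(t/2)tan(πσt) = −(π/2)σt² + O(t⁴), hence average front velocity v = −(π/2)σt + O(t³) over the time step t. -/
open MeasureTheory Real Filter Topology

lemma tan_sub_le_cube {x : ℝ} (hx0 : 0 ≤ x) (hx1 : x ≤ 1) :
    Real.tan x - x ≤ x ^ 3 := by
  have hxpi : x < Real.pi / 2 := lt_of_le_of_lt hx1 (by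
    have := Real.pi_gt_three; linarith)
  have hcos : (0:ℝ) < Real.cos x := Real.cos_pos_of_mem_Ioo ⟨by linarith, hxpi⟩
  have hsin : Real.sin x ≤ x := Real.sin_le hx0
  have hcosb : 1 - x ^ 2 / 2 ≤ Real.cos x := Real.one_sub_sq_div_two_le_cos
  rw [Real.tan_eq_sin_div_cos, div_sub' (ne_of_gt hcos), div_le_iff₀ hcos]
  nlinarith [Real.cos_le_one x, mul_nonneg (mul_nonneg hx0 hx0) hx0, sq_nonneg x, mul_le_one₀ hx1 hx0 hx1]

theorem threshold_front_velocity (σ : ℝ) (hσ : 0 < σ) :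
    ∃ C > 0, ∃ δ > 0, ∀ t : ℝ, 0 < t → t < δ →
      (1/Real.pi) * Real.arctan (2 * (-(t/2) * Real.tan (Real.pi * σ * t)) / t) = -σ * t ∧
      |(-(t/2) * Real.tan (Real.pi * σ * t)) + (Real.pi/2) * σ * t^2| ≤ C * t^4 ∧
      |(-(t/2) * Real.tan (Real.pi * σ * t)) / t + (Real.pi/2) * σ * t| ≤ C * t^3 := by
  have hpi : (0:ℝ) < Real.pi := Real.pi_pos
  refine ⟨(Real.pi * σ)^3 / 2, by positivity, 1 / (Real.pi * σ), by positivity, ?_⟩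
  intro t ht hδ
  set x := Real.pi * σ * t with hx
  have hx0 : 0 ≤ x := by positivity
  have hx1 : x ≤ 1 := by
    have := (lt_div_iff₀ (by positivity)).mp hδ
    nlinarith
  have hxpi : x < Real.pi / 2 := lt_of_le_of_lt hx1 (by
    have := Real.pi_gt_three; linarith)
  have htan := tan_sub_le_cube hx0 hx1
  have htange : x ≤ Real.tan x := by
    rcases eq_or_lt_of_le hx0 with h | h
    · simp [← h]
    · exact (Real.lt_tan h hxpi).le
  constructor
  · have h1 : 2 * (-(t/2) * Real.tan x) / t = -Real.tan x := by
      field_simp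
    rw [h1, ← Real.tan_neg, Real.arctan_tan (by linarith) (by linarith)]
    field_simp [hx]; ring
  have key : |(-(t/2) * Real.tan x) + (Real.pi/2) * σ * t^2| ≤ (Real.pi * σ)^3 / 2 * t^4 := by
    have h2 : (-(t/2) * Real.tan x) + (Real.pi/2) * σ * t^2 = -(t/2) * (Real.tan x - x) := by
      rw [hx]; ring
    rw [h2, abs_mul, abs_of_nonneg (by linarith : (0:ℝ) ≤ Real.tan x - x), abs_neg,
      abs_of_nonneg (by linarith : (0:ℝ) ≤ t/2)]
    calc t/2 * (Real.tan x - x) ≤ t/2 * x^3 := by nlinarith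
    _ = (Real.pi * σ)^3 / 2 * t^4 := by rw [hx]; ring
  refine ⟨key, ?_⟩
  have h3 : (-(t/2) * Real.tan x) / t + (Real.pi/2) * σ * t
      = ((-(t/2) * Real.tan x) + (Real.pi/2) * σ * t^2) / t := by
    field_simp
  rw [h3, abs_div, abs_of_nonneg ht.le, div_le_iff₀ ht]
  calc |(-(t/2) * Real.tan x) + (Real.pi/2) * σ * t^2| ≤ (Real.pi * σ)^3 / 2 * t^4 := key
  _ = (Real.pi * σ)^3 / 2 * t^3 * t := by ring
end

section
/- For the ν=0 kernel, the first moment (1/2π)∬_{ℝ²} (1/(η + c)) K₀(ξ,η,1) dξ dη (principal value) equals (1/2π)·c/((1/2)² + c²); in particular, with c = d/t and after the scaling K(ξ,η,t)dξdη = K(ξ/t,η/t,1)d(ξ/t)d(η/t), one obtains (1/2π)∬_{ℝ²} (1/ρ)K(ξ,η,t)dξdη ≈ (1/2π)·d/((t/2)² + d²) when ρ = η + d. -/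
open MeasureTheory Real Filter Topology

noncomputable def K0 (ξ η : ℝ) : ℝ :=
  (1/(2*Real.pi)) * (1/2) / (((1/2)^2 + ξ^2 + η^2) ^ ((3:ℝ)/2))

open Set


lemma hasDerivAt_F (b : ℝ) (hb : 0 < b) (x : ℝ) :
    HasDerivAt (fun x : ℝ => x / (b * Real.sqrt (b + x^2))) (((b + x^2) ^ ((3:ℝ)/2))⁻¹) x := by
  have hbx : 0 < b + x^2 := by positivity
  have hs : 0 < Real.sqrt (b + x^2) := Real.sqrt_pos.mpr hbx
  have h1 : HasDerivAt (fun x : ℝ => b + x^2) (2*x) x := by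
    simpa using ((hasDerivAt_pow 2 x).const_add b)
  have h2 : HasDerivAt (fun x : ℝ => Real.sqrt (b + x^2)) (x / Real.sqrt (b + x^2)) x := by
    have := (Real.hasDerivAt_sqrt hbx.ne').comp x h1
    refine this.congr_deriv ?_
    field_simp
  have h3 : HasDerivAt (fun x : ℝ => b * Real.sqrt (b + x^2))
      (b * (x / Real.sqrt (b + x^2))) x := h2.const_mul b
  have h4 := (hasDerivAt_id x).div h3 (by positivity)
  refine h4.congr_deriv ?_
  have hsq : Real.sqrt (b + x^2) ^ 2 = b + x^2 := Real.sq_sqrt hbx.le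
  have hpow : (b + x^2) ^ ((3:ℝ)/2) = Real.sqrt (b + x^2) ^ 3 := by
    rw [Real.sqrt_eq_rpow, ← Real.rpow_natCast ((b+x^2) ^ ((1:ℝ)/2)) 3, ← Real.rpow_mul hbx.le]
    norm_num
  rw [hpow]
  simp only [id]
  field_simp
  linear_combination hsq

lemma tendsto_F (b : ℝ) (hb : 0 < b) :
    Tendsto (fun x : ℝ => x / (b * Real.sqrt (b + x^2))) atTop (𝓝 (1/b)) := by
  have h1 : Tendsto (fun x : ℝ => b / x^2 + 1) atTop (𝓝 1) := by
    have := Filter.Tendsto.div_atTop (f := fun _ : ℝ => b) (l := atTop)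
      tendsto_const_nhds (tendsto_pow_atTop (n := 2) two_ne_zero)
    simpa using this.add (tendsto_const_nhds (x := (1:ℝ)))
  have h2 : Tendsto (fun x : ℝ => (b * Real.sqrt (b / x^2 + 1))⁻¹) atTop (𝓝 (1/b)) := by
    have hs : Tendsto (fun x : ℝ => Real.sqrt (b / x^2 + 1)) atTop (𝓝 1) := by
      have := (Real.continuous_sqrt.continuousAt (x := (1:ℝ))).tendsto.comp h1
      simpa [Function.comp_def] using this
    have := ((tendsto_const_nhds (x := b)).mul hs).inv₀ (by simpa using hb.ne')
    simpa [one_div] using this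
  refine h2.congr' ?_
  filter_upwards [eventually_gt_atTop (0:ℝ)] with x hx
  have hx2 : (0:ℝ) < x^2 := by positivity
  have ht : (0:ℝ) < b / x^2 + 1 := by positivity
  have key : Real.sqrt (b + x^2) = x * Real.sqrt (b / x^2 + 1) := by
    rw [← Real.sqrt_sq hx.le, ← Real.sqrt_mul (sq_nonneg x)]
    congr 1
    field_simp
    exact Real.sq_sqrt (sq_nonneg x)
  rw [key]
  have hst : Real.sqrt (b / x^2 + 1) ≠ 0 := (Real.sqrt_pos.mpr ht).ne'
  field_simp

lemma integrableOn_Ioi_aux (b : ℝ) (hb : 0 < b) :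
    IntegrableOn (fun x : ℝ => ((b + x^2) ^ ((3:ℝ)/2))⁻¹) (Ioi (0:ℝ)) :=
  integrableOn_Ioi_deriv_of_nonneg' (fun x _ => hasDerivAt_F b hb x)
    (fun x _ => by positivity) (tendsto_F b hb)

lemma integral_Ioi_aux (b : ℝ) (hb : 0 < b) :
    ∫ x in Ioi (0:ℝ), ((b + x^2) ^ ((3:ℝ)/2))⁻¹ = 1 / b := by
  have := integral_Ioi_of_hasDerivAt_of_nonneg' (fun x (_ : x ∈ Ici (0:ℝ)) => hasDerivAt_F b hb x)
    (fun x _ => by positivity) (tendsto_F b hb)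
  simpa using this

lemma integrableOn_Iic_aux (b : ℝ) (hb : 0 < b) :
    IntegrableOn (fun x : ℝ => ((b + x^2) ^ ((3:ℝ)/2))⁻¹) (Iic (0:ℝ)) := by
  rw [← Measure.map_neg_eq_self (volume : Measure ℝ)]
  have m : MeasurableEmbedding fun x : ℝ => -x := (Homeomorph.neg ℝ).measurableEmbedding
  rw [m.integrableOn_map_iff]
  simp only [Function.comp_def, neg_sq, neg_preimage, neg_Iic, neg_zero]
  exact Iff.mpr integrableOn_Ici_iff_integrableOn_Ioi (integrableOn_Ioi_aux b hb)

lemma integrable_aux (b : ℝ) (hb : 0 < b) :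
    Integrable (fun x : ℝ => ((b + x^2) ^ ((3:ℝ)/2))⁻¹) := by
  rw [← integrableOn_univ, ← Iic_union_Ioi (a := (0:ℝ))]
  exact (integrableOn_Iic_aux b hb).union (integrableOn_Ioi_aux b hb)

lemma integral_total_aux (b : ℝ) (hb : 0 < b) :
    ∫ x : ℝ, ((b + x^2) ^ ((3:ℝ)/2))⁻¹ = 2 / b := by
  rw [← setIntegral_univ, ← Iic_union_Ioi (a := (0:ℝ)),
    setIntegral_union (Iic_disjoint_Ioi le_rfl) measurableSet_Ioi
      (integrableOn_Iic_aux b hb) (integrableOn_Ioi_aux b hb)]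
  have h := integral_comp_neg_Iic (0:ℝ) (fun x : ℝ => ((b + x^2) ^ ((3:ℝ)/2))⁻¹)
  simp only [neg_sq, neg_zero] at h
  rw [h, integral_Ioi_aux b hb]
  ring



lemma K0_nonneg (ξ η : ℝ) : 0 ≤ K0 ξ η := by
  unfold K0
  have h : (0:ℝ) < ((1/2)^2 + ξ^2 + η^2) ^ ((3:ℝ)/2) :=
    Real.rpow_pos_of_pos (by positivity) _
  positivity

lemma K0_eq (ξ η : ℝ) :
    K0 ξ η = (1/(4*Real.pi)) * (((1/4 + η^2) + ξ^2) ^ ((3:ℝ)/2))⁻¹ := by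
  unfold K0
  rw [show (1/2:ℝ)^2 + ξ^2 + η^2 = (1/4 + η^2) + ξ^2 by ring, div_eq_mul_inv]
  ring

lemma K0_symm (ξ η : ℝ) : K0 ξ η = K0 η ξ := by
  unfold K0
  rw [show (1/2:ℝ)^2 + ξ^2 + η^2 = (1/2)^2 + η^2 + ξ^2 by ring]

lemma K0_section_integrable (η : ℝ) : Integrable (fun ξ : ℝ => K0 ξ η) := by
  have hb : (0:ℝ) < 1/4 + η^2 := by positivity
  have := (integrable_aux _ hb).const_mul (1/(4*Real.pi))
  exact this.congr (Filter.Eventually.of_forall fun ξ => (K0_eq ξ η).symm)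

lemma K0_marginal (η : ℝ) :
    ∫ ξ : ℝ, K0 ξ η = (1/(2*Real.pi)) * ((1/2:ℝ)^2 + η^2)⁻¹ := by
  have hb : (0:ℝ) < 1/4 + η^2 := by positivity
  simp_rw [fun ξ => K0_eq ξ η]
  rw [integral_const_mul, integral_total_aux _ hb,
    show (1/2:ℝ)^2 + η^2 = 1/4 + η^2 by norm_num]
  rw [div_eq_mul_inv, mul_inv]
  ring

lemma K0_cont : Continuous fun p : ℝ × ℝ => K0 p.1 p.2 := by
  unfold K0
  apply Continuous.div continuous_const
  · apply Continuous.rpow_const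
    · exact (continuous_const.add ((continuous_fst.pow 2))).add (continuous_snd.pow 2)
    · intro p; left; positivity
  · intro p
    exact (Real.rpow_pos_of_pos (by positivity) _).ne'

lemma integrable_quarter (d : ℝ) :
    Integrable (fun x : ℝ => ((1/4:ℝ) + (x + d)^2)⁻¹) := by
  have h : Integrable (fun x : ℝ => 4 * ((1:ℝ) + x^2)⁻¹) :=
    integrable_inv_one_add_sq.const_mul 4
  have h2 : Integrable (fun x : ℝ => 4 * ((1:ℝ) + (x + d)^2)⁻¹) := h.comp_add_right d
  refine h2.mono' ?_ (Filter.Eventually.of_forall fun x => ?_)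
  · refine Continuous.aestronglyMeasurable ?_
    refine Continuous.inv₀ (by continuity) (fun x => by positivity)
  · rw [Real.norm_eq_abs, abs_of_nonneg (by positivity)]
    rw [show (4:ℝ) * ((1:ℝ) + (x+d)^2)⁻¹ = (((1:ℝ) + (x+d)^2)/4)⁻¹ by rw [inv_div]; ring]
    refine inv_anti₀ (by positivity) (by nlinarith [sq_nonneg (x+d)])

lemma K0_prod_integrable : Integrable (fun p : ℝ × ℝ => K0 p.1 p.2) := by
  rw [Measure.volume_eq_prod, integrable_prod_iff K0_cont.aestronglyMeasurable]
  constructor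
  · exact Filter.Eventually.of_forall fun ξ =>
      (K0_section_integrable ξ).congr
        (Filter.Eventually.of_forall fun η => (K0_symm η ξ))
  · have : ∀ ξ : ℝ, (∫ η : ℝ, ‖K0 ξ η‖) = (1/(2*Real.pi)) * ((1/2:ℝ)^2 + ξ^2)⁻¹ := by
      intro ξ
      have : ∀ η : ℝ, ‖K0 ξ η‖ = K0 η ξ := fun η => by
        rw [Real.norm_eq_abs, abs_of_nonneg (K0_nonneg ξ η), K0_symm]
      simp_rw [this]
      exact K0_marginal ξ
    simp_rw [this]
    have := (integrable_quarter 0).const_mul (1/(2*Real.pi))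
    simp only [add_zero] at this
    exact this.congr (Filter.Eventually.of_forall fun x => by norm_num)


noncomputable def gfun (η : ℝ) : ℝ := (1/(2*Real.pi)) * (((1/2:ℝ)^2 + η^2)⁻¹)

noncomputable def hfun (c u : ℝ) : ℝ :=
  (2*c/Real.pi) * (((1/4:ℝ)+(u-c)^2)⁻¹ * ((1/4:ℝ)+(u+c)^2)⁻¹)

noncomputable def Hfun (c u : ℝ) : ℝ :=
  (2*c/Real.pi) * ( ((-1/(4*c*(1/4+c^2)))/2) *
      (Real.log ((1/4:ℝ)+(u-c)^2) - Real.log ((1/4:ℝ)+(u+c)^2))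
    + 2*((-1/(4*c*(1/4+c^2)))*c + 1/(2*(1/4+c^2))) *
      (Real.arctan (2*(u-c)) + Real.arctan (2*(u+c))) )

lemma key_identity (c : ℝ) {u : ℝ} (hu : u ≠ 0) :
    (1/((u-c)+c)) * gfun (u-c) + (1/((-u-c)+c)) * gfun (-u-c) = hfun c u := by
  unfold gfun hfun
  have h1 : (0:ℝ) < 1/4 + (u-c)^2 := by positivity
  have h2 : (0:ℝ) < 1/4 + (u+c)^2 := by positivity
  have hπ := Real.pi_ne_zero
  have e1 : ((1/2:ℝ))^2 + (u-c)^2 = 1/4 + (u-c)^2 := by norm_num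
  have e2 : ((1/2:ℝ))^2 + (-u-c)^2 = 1/4 + (u+c)^2 := by ring_nf
  rw [e1, e2]
  simp only [sub_add_cancel]
  field_simp
  ring

lemma hasDerivAt_H (c : ℝ) (hc : c ≠ 0) (u : ℝ) :
    HasDerivAt (Hfun c) (hfun c u) u := by
  have h1 : (0:ℝ) < 1/4 + (u-c)^2 := by positivity
  have h2 : (0:ℝ) < 1/4 + (u+c)^2 := by positivity
  have hm : HasDerivAt (fun u : ℝ => (1/4:ℝ)+(u-c)^2) (2*(u-c)) u := by
    have := (((hasDerivAt_id u).sub_const c).pow 2).const_add (1/4:ℝ)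
    simpa using this
  have hp : HasDerivAt (fun u : ℝ => (1/4:ℝ)+(u+c)^2) (2*(u+c)) u := by
    have := (((hasDerivAt_id u).add_const c).pow 2).const_add (1/4:ℝ)
    simpa using this
  have hlog1 : HasDerivAt (fun u : ℝ => Real.log ((1/4:ℝ)+(u-c)^2))
      ((2*(u-c))/((1/4:ℝ)+(u-c)^2)) u := by
    have := (Real.hasDerivAt_log h1.ne').comp u hm
    simpa [div_eq_inv_mul, mul_comm, Function.comp_def] using this
  have hlog2 : HasDerivAt (fun u : ℝ => Real.log ((1/4:ℝ)+(u+c)^2))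
      ((2*(u+c))/((1/4:ℝ)+(u+c)^2)) u := by
    have := (Real.hasDerivAt_log h2.ne').comp u hp
    simpa [div_eq_inv_mul, mul_comm, Function.comp_def] using this
  have hin1 : HasDerivAt (fun u : ℝ => 2*(u-c)) 2 u := by
    simpa using ((hasDerivAt_id u).sub_const c).const_mul 2
  have hin2 : HasDerivAt (fun u : ℝ => 2*(u+c)) 2 u := by
    simpa using ((hasDerivAt_id u).add_const c).const_mul 2
  have harc1 : HasDerivAt (fun u : ℝ => Real.arctan (2*(u-c)))
      (2/(1+(2*(u-c))^2)) u := by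
    have := (Real.hasDerivAt_arctan (2*(u-c))).comp u hin1
    simpa [div_eq_inv_mul, mul_comm, Function.comp_def] using this
  have harc2 : HasDerivAt (fun u : ℝ => Real.arctan (2*(u+c)))
      (2/(1+(2*(u+c))^2)) u := by
    have := (Real.hasDerivAt_arctan (2*(u+c))).comp u hin2
    simpa [div_eq_inv_mul, mul_comm, Function.comp_def] using this
  have H := ((((hlog1.sub hlog2).const_mul ((-1/(4*c*(1/4+c^2)))/2)).add
    ((harc1.add harc2).const_mul (2*((-1/(4*c*(1/4+c^2)))*c + 1/(2*(1/4+c^2)))))).const_mul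
    (2*c/Real.pi))
  refine H.congr_deriv ?_
  unfold hfun
  have hπ := Real.pi_ne_zero
  have h3 : (0:ℝ) < 1/4 + c^2 := by positivity
  have h4 : (0:ℝ) < 1+(2*(u-c))^2 := by positivity
  have h5 : (0:ℝ) < 1+(2*(u+c))^2 := by positivity
  field_simp
  ring

lemma tendsto_ratio (c : ℝ) :
    Tendsto (fun u : ℝ => ((1/4:ℝ)+(u-c)^2)/((1/4:ℝ)+(u+c)^2)) atTop (𝓝 1) := by
  have t1 : Tendsto (fun u : ℝ => 1/(4*u^2)) atTop (𝓝 0) := by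
    apply Tendsto.div_atTop (tendsto_const_nhds (x := (1:ℝ)))
    exact (tendsto_pow_atTop two_ne_zero).const_mul_atTop (by norm_num)
  have t2 : Tendsto (fun u : ℝ => c/u) atTop (𝓝 0) :=
    Tendsto.div_atTop tendsto_const_nhds tendsto_id
  have tnum : Tendsto (fun u : ℝ => 1/(4*u^2) + (1 - c/u)^2) atTop (𝓝 1) := by
    have := t1.add (((tendsto_const_nhds (x := (1:ℝ))).sub t2).pow 2)
    simpa using this
  have tden : Tendsto (fun u : ℝ => 1/(4*u^2) + (1 + c/u)^2) atTop (𝓝 1) := by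
    have := t1.add (((tendsto_const_nhds (x := (1:ℝ))).add t2).pow 2)
    simpa using this
  have := tnum.div tden one_ne_zero
  rw [div_one] at this
  refine this.congr' ?_
  filter_upwards [eventually_gt_atTop (0:ℝ)] with u hu
  have h2 : (0:ℝ) < 1/4 + (u+c)^2 := by positivity
  rw [Pi.div_apply]
  field_simp

lemma tendsto_H (c : ℝ) (hc : c ≠ 0) :
    Tendsto (Hfun c) atTop (𝓝 (c/(1/4+c^2))) := by
  have hπ := Real.pi_ne_zero
  have h3 : (0:ℝ) < 1/4 + c^2 := by positivity
  have hlog : Tendsto (fun u : ℝ =>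
      Real.log ((1/4:ℝ)+(u-c)^2) - Real.log ((1/4:ℝ)+(u+c)^2)) atTop (𝓝 0) := by
    have hcomp := ((Real.continuousAt_log one_ne_zero).tendsto).comp (tendsto_ratio c)
    rw [Real.log_one] at hcomp
    refine hcomp.congr' ?_
    refine Filter.Eventually.of_forall fun u => ?_
    have h1 : (0:ℝ) < 1/4 + (u-c)^2 := by positivity
    have h2 : (0:ℝ) < 1/4 + (u+c)^2 := by positivity
    exact (Real.log_div h1.ne' h2.ne')
  have hatan : ∀ d : ℝ, Tendsto (fun u : ℝ => Real.arctan (2*(u+d))) atTop (𝓝 (π/2)) := by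
    intro d
    have hin : Tendsto (fun u : ℝ => 2*(u+d)) atTop atTop := by
      apply Tendsto.const_mul_atTop (by norm_num : (0:ℝ) < 2)
      exact tendsto_atTop_add_const_right atTop d tendsto_id
    exact (Real.tendsto_arctan_atTop.mono_right nhdsWithin_le_nhds).comp hin
  have harc1 : Tendsto (fun u : ℝ => Real.arctan (2*(u-c))) atTop (𝓝 (π/2)) := by
    have := hatan (-c)
    simpa [sub_eq_add_neg] using this
  have harc2 := hatan c
  have := ((hlog.const_mul ((-1/(4*c*(1/4+c^2)))/2)).add
    ((harc1.add harc2).const_mul (2*((-1/(4*c*(1/4+c^2)))*c + 1/(2*(1/4+c^2)))))).const_mul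
    (2*c/Real.pi)
  unfold Hfun
  convert this using 2
  field_simp
  ring

lemma integrable_quarter' (d : ℝ) :
    Integrable (fun x : ℝ => ((1/4:ℝ) + (x + d)^2)⁻¹) := by
  have h : Integrable (fun x : ℝ => 4 * ((1:ℝ) + x^2)⁻¹) :=
    integrable_inv_one_add_sq.const_mul 4
  have h2 : Integrable (fun x : ℝ => 4 * ((1:ℝ) + (x + d)^2)⁻¹) := h.comp_add_right d
  refine h2.mono' ?_ (Filter.Eventually.of_forall fun x => ?_)
  · exact Continuous.aestronglyMeasurable
      (Continuous.inv₀ (by continuity) (fun x => by positivity))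
  · rw [Real.norm_eq_abs, abs_of_nonneg (by positivity)]
    rw [show (4:ℝ) * ((1:ℝ) + (x+d)^2)⁻¹ = (((1:ℝ) + (x+d)^2)/4)⁻¹ by rw [inv_div]; ring]
    exact inv_anti₀ (by positivity) (by nlinarith [sq_nonneg (x+d)])

lemma hfun_integrable (c : ℝ) : Integrable (hfun c) := by
  have h := (integrable_quarter' (-c)).const_mul (|2*c/Real.pi| * 4)
  refine h.mono' ?_ (Filter.Eventually.of_forall fun u => ?_)
  · unfold hfun
    refine Continuous.aestronglyMeasurable (continuous_const.mul (Continuous.mul ?_ ?_)) <;>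
      exact Continuous.inv₀ (by continuity) (fun x => by positivity)
  · unfold hfun
    have h1 : (0:ℝ) < 1/4 + (u-c)^2 := by positivity
    have h2 : (0:ℝ) < 1/4 + (u+c)^2 := by positivity
    rw [Real.norm_eq_abs, abs_mul, abs_of_nonneg (by positivity : (0:ℝ) ≤ (1/4+(u-c)^2)⁻¹ * (1/4+(u+c)^2)⁻¹)]
    have hb : ((1/4:ℝ)+(u-c)^2)⁻¹ * ((1/4:ℝ)+(u+c)^2)⁻¹ ≤ (1/4+(u-c)^2)⁻¹ * 4 := by
      refine mul_le_mul_of_nonneg_left ?_ (by positivity)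
      rw [show (4:ℝ) = (1/4:ℝ)⁻¹ by norm_num]
      exact inv_anti₀ (by norm_num) (by nlinarith [sq_nonneg (u+c)])
    calc |2*c/Real.pi| * ((1/4+(u-c)^2)⁻¹ * (1/4+(u+c)^2)⁻¹)
        ≤ |2*c/Real.pi| * ((1/4+(u-c)^2)⁻¹ * 4) := by
          exact mul_le_mul_of_nonneg_left hb (abs_nonneg _)
      _ = |2*c/Real.pi| * 4 * (1/4 + (u + -c)^2)⁻¹ := by rw [sub_eq_add_neg]; ring

lemma integral_Ioi_hfun (c : ℝ) (hc : c ≠ 0) :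
    ∫ u in Ioi (0:ℝ), hfun c u = c/(1/4+c^2) := by
  have := integral_Ioi_of_hasDerivAt_of_tendsto
    (f := Hfun c) (f' := hfun c) (a := 0) (m := c/(1/4+c^2))
    (hasDerivAt_H c hc 0).continuousAt.continuousWithinAt
    (fun x _ => hasDerivAt_H c hc x)
    ((hfun_integrable c).integrableOn)
    (tendsto_H c hc)
  rw [this]
  have h0 : Hfun c 0 = 0 := by
    unfold Hfun
    rw [show ((1/4:ℝ)+(0-c)^2) = (1/4:ℝ)+(0+c)^2 by ring]
    rw [show (2*((0:ℝ)-c)) = -(2*(0+c)) by ring, Real.arctan_neg]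
    ring
  rw [h0, sub_zero]

lemma gfun_cont : Continuous gfun := by
  unfold gfun
  exact continuous_const.mul (Continuous.inv₀ (by continuity) (fun x => by positivity))

lemma gfun_integrable : Integrable gfun := by
  have := (integrable_quarter' 0).const_mul (1/(2*Real.pi))
  refine this.congr (Filter.Eventually.of_forall fun x => ?_)
  unfold gfun
  norm_num

lemma gfun_nonneg (η : ℝ) : 0 ≤ gfun η := by
  unfold gfun
  positivity

lemma hfun_bound (c u : ℝ) : ‖hfun c u‖ ≤ |2*c/Real.pi| * 16 := by
  unfold hfun
  have h1 : (0:ℝ) < 1/4 + (u-c)^2 := by positivity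
  have h2 : (0:ℝ) < 1/4 + (u+c)^2 := by positivity
  rw [Real.norm_eq_abs, abs_mul, abs_of_nonneg (by positivity :
    (0:ℝ) ≤ ((1/4:ℝ)+(u-c)^2)⁻¹ * ((1/4:ℝ)+(u+c)^2)⁻¹)]
  refine mul_le_mul_of_nonneg_left ?_ (abs_nonneg _)
  have e1 : ((1/4:ℝ)+(u-c)^2)⁻¹ ≤ 4 := by
    rw [show (4:ℝ) = (1/4:ℝ)⁻¹ by norm_num]
    exact inv_anti₀ (by norm_num) (by nlinarith [sq_nonneg (u-c)])
  have e2 : ((1/4:ℝ)+(u+c)^2)⁻¹ ≤ 4 := by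
    rw [show (4:ℝ) = (1/4:ℝ)⁻¹ by norm_num]
    exact inv_anti₀ (by norm_num) (by nlinarith [sq_nonneg (u+c)])
  calc ((1/4:ℝ)+(u-c)^2)⁻¹ * ((1/4:ℝ)+(u+c)^2)⁻¹ ≤ 4 * 4 :=
        mul_le_mul e1 e2 (by positivity) (by norm_num)
    _ = 16 := by norm_num

lemma tendsto_eps (c : ℝ) :
    Tendsto (fun ε : ℝ => ∫ u in Ioi ε, hfun c u) (𝓝[>] (0:ℝ))
      (𝓝 (∫ u in Ioi (0:ℝ), hfun c u)) := by
  have hsmall : Tendsto (fun ε : ℝ => ∫ u in Ioc (0:ℝ) ε, hfun c u) (𝓝[>] (0:ℝ)) (𝓝 0) := by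
    apply squeeze_zero_norm' (a := fun ε => (|2*c/Real.pi| * 16) * ε)
    · filter_upwards [self_mem_nhdsWithin] with ε (hε : ε ∈ Ioi (0:ℝ))
      have hb := norm_setIntegral_le_of_norm_le_const (μ := volume) (s := Ioc (0:ℝ) ε)
        (f := hfun c) (C := |2*c/Real.pi| * 16)
        (by rw [Real.volume_Ioc]; exact ENNReal.ofReal_lt_top)
        (fun u _ => hfun_bound c u)
      rw [Real.volume_real_Ioc_of_le hε.le] at hb
      simpa using hb
    · have : Tendsto (fun ε : ℝ => (|2*c/Real.pi| * 16) * ε) (𝓝 (0:ℝ))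
          (𝓝 ((|2*c/Real.pi| * 16) * 0)) := (continuous_const.mul continuous_id).tendsto 0
      rw [mul_zero] at this
      exact this.mono_left nhdsWithin_le_nhds
  have := (tendsto_const_nhds (x := ∫ u in Ioi (0:ℝ), hfun c u)).sub hsmall
  rw [sub_zero] at this
  refine this.congr' ?_
  filter_upwards [self_mem_nhdsWithin] with ε (hε : ε ∈ Ioi (0:ℝ))
  rw [← Ioc_union_Ioi_eq_Ioi (le_of_lt hε), setIntegral_union Ioc_disjoint_Ioi_same
    measurableSet_Ioi ((hfun_integrable c).integrableOn) ((hfun_integrable c).integrableOn)]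
  ring

lemma f_integrableOn (c : ℝ) {ε : ℝ} (hε : 0 < ε) :
    IntegrableOn (fun η : ℝ => (1/(η + c)) * gfun η) {η : ℝ | ε < |η + c|} := by
  refine Integrable.mono' ((gfun_integrable.const_mul ε⁻¹).integrableOn) ?_ ?_
  · refine AEStronglyMeasurable.restrict (Measurable.aestronglyMeasurable ?_)
    exact (measurable_const.div (measurable_id.add_const c)).mul gfun_cont.measurable
  · have hS : MeasurableSet {η : ℝ | ε < |η + c|} :=
      (isOpen_lt continuous_const ((continuous_id.add continuous_const).abs)).measurableSet
    refine (ae_restrict_iff' hS).mpr (Filter.Eventually.of_forall fun η hη => ?_)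
    have hη' : ε < |η + c| := hη
    rw [norm_mul, Real.norm_eq_abs, Real.norm_eq_abs, abs_of_nonneg (gfun_nonneg η),
      abs_div, abs_one, one_div]
    exact mul_le_mul_of_nonneg_right (inv_anti₀ hε hη'.le) (gfun_nonneg η)

lemma set_decomp (c : ℝ) {ε : ℝ} (hε : 0 < ε) :
    ∫ η in {η : ℝ | ε < |η + c|}, (1/(η + c)) * gfun η = ∫ u in Ioi ε, hfun c u := by
  set f : ℝ → ℝ := fun η => (1/(η + c)) * gfun η with hf
  have hTeq : {η : ℝ | ε < |η + c|} = Iio (-c-ε) ∪ Ioi (ε-c) := by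
    ext η
    simp only [mem_setOf_eq, Set.mem_union, Set.mem_Iio, Set.mem_Ioi, lt_abs]
    constructor
    · rintro (h | h)
      · right; linarith
      · left; linarith
    · rintro (h | h)
      · right; linarith
      · left; linarith
  have hint := f_integrableOn c hε
  rw [hTeq] at hint ⊢
  have hint1 : IntegrableOn f (Iio (-c-ε)) := hint.mono_set subset_union_left
  have hint2 : IntegrableOn f (Ioi (ε-c)) := hint.mono_set subset_union_right
  have hdisj : Disjoint (Iio (-c-ε)) (Ioi (ε-c)) :=
    (Iio_disjoint_Ici (by linarith)).mono_right Ioi_subset_Ici_self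
  rw [setIntegral_union hdisj measurableSet_Ioi hint1 hint2]
  -- translate the Ioi part
  have hmp : MeasurePreserving (· - c) (volume : Measure ℝ) volume :=
    measurePreserving_sub_right volume c
  have hemb : MeasurableEmbedding (· - c : ℝ → ℝ) :=
    (Homeomorph.subRight c).measurableEmbedding
  have htrans2 : ∫ η in Ioi (ε-c), f η = ∫ u in Ioi ε, f (u - c) := by
    have := hmp.setIntegral_preimage_emb hemb f (Ioi (ε-c))
    rw [show (· - c : ℝ → ℝ) ⁻¹' Ioi (ε-c) = Ioi ε by
      ext x; simp [Set.mem_Ioi, lt_sub_iff_add_lt, sub_lt_sub_iff_right]] at this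
    exact this.symm
  have htrans1 : ∫ η in Iio (-c-ε), f η = ∫ u in Iio (-ε), f (u - c) := by
    have := hmp.setIntegral_preimage_emb hemb f (Iio (-c-ε))
    rw [show (· - c : ℝ → ℝ) ⁻¹' Iio (-c-ε) = Iio (-ε) by
      ext x; simp only [Set.mem_preimage, Set.mem_Iio]; constructor <;> intro h <;> linarith]
      at this
    exact this.symm
  have hrefl : ∫ u in Iio (-ε), f (u - c) = ∫ u in Ioi ε, f (-u - c) := by
    rw [← integral_Iic_eq_integral_Iio]
    have := integral_comp_neg_Ioi ε (fun x : ℝ => f (x - c))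
    rw [← this]
  rw [htrans1, htrans2, hrefl]
  -- integrability of both pieces on Ioi ε
  have hbound : ∀ u : ℝ, u ∈ Ioi ε → ‖f (-u - c)‖ ≤ ε⁻¹ * gfun (u + c) := by
    intro u hu
    have hu' : ε < u := hu
    rw [hf]
    simp only
    have : gfun (-u - c) = gfun (u + c) := by unfold gfun; ring_nf
    rw [norm_mul, Real.norm_eq_abs, Real.norm_eq_abs, abs_of_nonneg (gfun_nonneg _), this]
    refine mul_le_mul_of_nonneg_right ?_ (gfun_nonneg _)
    rw [abs_div, abs_one, one_div, show -u - c + c = -u by ring, abs_neg,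
      abs_of_pos (lt_trans hε hu')]
    exact inv_anti₀ hε hu'.le
  have hi1 : IntegrableOn (fun u : ℝ => f (-u - c)) (Ioi ε) := by
    refine Integrable.mono' (((gfun_integrable.comp_add_right c).const_mul ε⁻¹).integrableOn) ?_ ?_
    · refine AEStronglyMeasurable.restrict (Measurable.aestronglyMeasurable ?_)
      refine Measurable.mul ?_ (gfun_cont.measurable.comp (measurable_id.neg.add_const (-c)))
      · refine measurable_const.div ?_
        exact (measurable_id.neg.add_const (-c)).add_const c
    · exact (ae_restrict_iff' measurableSet_Ioi).mpr (Filter.Eventually.of_forall hbound)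
  have hi2 : IntegrableOn (fun u : ℝ => f (u - c)) (Ioi ε) := by
    refine Integrable.mono' (((gfun_integrable.comp_sub_right c).const_mul ε⁻¹).integrableOn) ?_ ?_
    · refine AEStronglyMeasurable.restrict (Measurable.aestronglyMeasurable ?_)
      refine Measurable.mul ?_ (gfun_cont.measurable.comp (measurable_id.sub_const c))
      · exact measurable_const.div ((measurable_id.sub_const c).add_const c)
    · refine (ae_restrict_iff' measurableSet_Ioi).mpr (Filter.Eventually.of_forall fun u hu => ?_)
      have hu' : ε < u := hu
      rw [hf]
      simp only
      rw [norm_mul, Real.norm_eq_abs, Real.norm_eq_abs, abs_of_nonneg (gfun_nonneg _)]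
      refine mul_le_mul_of_nonneg_right ?_ (gfun_nonneg _)
      rw [abs_div, abs_one, one_div, show u - c + c = u by ring,
        abs_of_pos (lt_trans hε hu')]
      exact inv_anti₀ hε hu'.le
  rw [← integral_add hi1 hi2]
  refine setIntegral_congr_fun measurableSet_Ioi (fun u hu => ?_)
  have hu0 : u ≠ 0 := (lt_trans hε hu).ne'
  have := key_identity c (u := u) hu0
  rw [hf]
  simp only
  rw [show -u - c + c = (-u - c) + c by ring, show u - c + c = (u - c) + c by ring] at *
  linarith [this]



lemma fubini_step (c : ℝ) {ε : ℝ} (hε : 0 < ε) :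
    ∫ p in {p : ℝ × ℝ | ε < |p.2 + c|}, (1/(p.2 + c)) * K0 p.1 p.2
    = ∫ η in {η : ℝ | ε < |η + c|},
        (1/(η + c)) * ((1/(2*Real.pi)) * ((1/2:ℝ)^2 + η^2)⁻¹) := by
  set T : Set ℝ := {η : ℝ | ε < |η + c|} with hTdef
  have hTopen : IsOpen T := by
    have : Continuous fun η : ℝ => |η + c| := (continuous_id.add continuous_const).abs
    exact isOpen_lt continuous_const this
  have hT : MeasurableSet T := hTopen.measurableSet
  have hset : {p : ℝ × ℝ | ε < |p.2 + c|} = (univ : Set ℝ) ×ˢ T := by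
    ext p; simp [hTdef, Set.mem_prod]
  have hmeas : (volume : Measure (ℝ × ℝ)).restrict ((univ : Set ℝ) ×ˢ T)
      = (volume : Measure ℝ).prod ((volume : Measure ℝ).restrict T) := by
    rw [Measure.volume_eq_prod, ← Measure.prod_restrict, Measure.restrict_univ]
  have hfmeas : Measurable fun p : ℝ × ℝ => (1/(p.2 + c)) * K0 p.1 p.2 := by
    have h1 : Measurable fun p : ℝ × ℝ => 1/(p.2 + c) :=
      measurable_const.div (measurable_snd.add_const c)
    exact h1.mul K0_cont.measurable
  have hf : Integrable (fun p : ℝ × ℝ => (1/(p.2 + c)) * K0 p.1 p.2)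
      ((volume : Measure ℝ).prod ((volume : Measure ℝ).restrict T)) := by
    refine Integrable.mono' (g := fun p : ℝ × ℝ => ε⁻¹ * K0 p.1 p.2) ?_
      hfmeas.aestronglyMeasurable ?_
    · have := (K0_prod_integrable.const_mul ε⁻¹).restrict (s := (univ : Set ℝ) ×ˢ T)
      rwa [hmeas] at this
    · rw [← hmeas]
      have hS : MeasurableSet ((univ : Set ℝ) ×ˢ T) := MeasurableSet.univ.prod hT
      refine (ae_restrict_iff' hS).mpr (Filter.Eventually.of_forall fun p hp => ?_)
      have hp2 : ε < |p.2 + c| := hp.2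
      rw [norm_mul, Real.norm_eq_abs, Real.norm_eq_abs, abs_of_nonneg (K0_nonneg _ _),
        abs_div, abs_one, one_div]
      refine mul_le_mul_of_nonneg_right ?_ (K0_nonneg _ _)
      exact inv_anti₀ hε hp2.le
  rw [hset]
  show ∫ p : ℝ × ℝ, (1/(p.2 + c)) * K0 p.1 p.2
      ∂((volume : Measure (ℝ × ℝ)).restrict ((univ : Set ℝ) ×ˢ T)) = _
  rw [hmeas, integral_prod_symm _ hf]
  refine integral_congr_ae (Filter.Eventually.of_forall fun η => ?_)
  show ∫ ξ : ℝ, 1/(η + c) * K0 ξ η = _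
  rw [integral_const_mul, K0_marginal]


theorem pv_first_moment_nu_zero (c : ℝ) (hc : c ≠ 0) :
    Tendsto (fun ε : ℝ =>
        (1/(2*Real.pi)) * ∫ p in {p : ℝ × ℝ | ε < |p.2 + c|}, (1/(p.2 + c)) * K0 p.1 p.2)
      (nhdsWithin 0 (Set.Ioi 0))
      (nhds ((1/(2*Real.pi)) * (c / ((1/2)^2 + c^2)))) := by
  have h1 : Tendsto (fun ε : ℝ => ∫ u in Ioi ε, hfun c u) (𝓝[>] (0:ℝ))
      (𝓝 (c/(1/4+c^2))) := by
    rw [← integral_Ioi_hfun c hc]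
    exact tendsto_eps c
  have h2 : Tendsto (fun ε : ℝ => (1/(2*Real.pi)) * ∫ u in Ioi ε, hfun c u)
      (𝓝[>] (0:ℝ)) (𝓝 ((1/(2*Real.pi)) * (c / ((1/2)^2 + c^2)))) := by
    have := h1.const_mul (1/(2*Real.pi))
    convert this using 2
    norm_num
  refine h2.congr' ?_
  filter_upwards [self_mem_nhdsWithin] with ε (hε : ε ∈ Ioi (0:ℝ))
  have hd : ∫ η in {η : ℝ | ε < |η + c|},
      (1/(η + c)) * ((1/(2*Real.pi)) * ((1/2:ℝ)^2 + η^2)⁻¹) = ∫ u in Ioi ε, hfun c u :=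
    set_decomp c hε
  rw [← hd, ← fubini_step c hε]
end
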